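/- Let s : (0,∞) × ℝ × ℝⁿ → ℝ be strictly concave with ∂s/∂u > 0. Define η(ρ, m, E, Z) = −ρ · s(1/ρ, E/ρ − |m|²/(2ρ²), Z/ρ) on the domain ρ > 0, m ∈ ℝᵈ, E ∈ ℝ, Z ∈ ℝⁿ. Then η is strictly convex in (ρ, m, E, Z). -/

import Mathlib

private lemma scalar_id (a b r₁ r₂ t₁ t₂ : ℝ) (h1 : r₁ ≠ 0) (h2 : r₂ ≠ 0)
    (h3 : a*r₁+b*r₂ ≠ 0) :
    a*t₁^2/r₁ + b*t₂^2/r₂ - (a*t₁+b*t₂)^2/(a*r₁+b*r₂)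
      = a*b*(t₁*r₂-t₂*r₁)^2/(r₁*r₂*(a*r₁+b*r₂)) := by
  field_simp
  ring

private lemma sum_ineq {d : ℕ} (a b r₁ r₂ : ℝ) (m₁ m₂ : Fin d → ℝ)
    (ha : 0 < a) (hb : 0 < b) (h1 : 0 < r₁) (h2 : 0 < r₂) :
    (∑ i, (a * m₁ i + b * m₂ i)^2)/(a*r₁+b*r₂)
      ≤ a*(∑ i, m₁ i ^2)/r₁ + b*(∑ i, m₂ i ^2)/r₂ ∧
    ((∃ i, m₁ i * r₂ ≠ m₂ i * r₁) →
      (∑ i, (a * m₁ i + b * m₂ i)^2)/(a*r₁+b*r₂)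
        < a*(∑ i, m₁ i ^2)/r₁ + b*(∑ i, m₂ i ^2)/r₂) := by
  have hr : 0 < a*r₁+b*r₂ := by positivity
  have key : a*(∑ i, m₁ i ^2)/r₁ + b*(∑ i, m₂ i ^2)/r₂
      - (∑ i, (a * m₁ i + b * m₂ i)^2)/(a*r₁+b*r₂)
      = ∑ i, a*b*(m₁ i * r₂ - m₂ i * r₁)^2/(r₁*r₂*(a*r₁+b*r₂)) := by
    rw [Finset.mul_sum, Finset.mul_sum, Finset.sum_div, Finset.sum_div, Finset.sum_div,
      ← Finset.sum_add_distrib, ← Finset.sum_sub_distrib]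
    exact Finset.sum_congr rfl fun i _ => scalar_id a b r₁ r₂ (m₁ i) (m₂ i) h1.ne' h2.ne' hr.ne'
  constructor
  · have : (0:ℝ) ≤ ∑ i, a*b*(m₁ i * r₂ - m₂ i * r₁)^2/(r₁*r₂*(a*r₁+b*r₂)) := by positivity
    linarith [key]
  · rintro ⟨i, hi⟩
    have : (0:ℝ) < ∑ i, a*b*(m₁ i * r₂ - m₂ i * r₁)^2/(r₁*r₂*(a*r₁+b*r₂)) := by
      apply Finset.sum_pos' (fun j _ => by positivity)
      refine ⟨i, Finset.mem_univ i, ?_⟩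
      have : m₁ i * r₂ - m₂ i * r₁ ≠ 0 := sub_ne_zero.mpr hi
      positivity
    linarith [key]

set_option maxHeartbeats 1000000 in
/-- `η(ρ, m, E, Z) = −ρ · s(1/ρ, E/ρ − |m|²/(2ρ²), Z/ρ)` is
strictly convex on `{ρ > 0}` when `s` is strictly concave with `s_u > 0`. -/
theorem stmt_5 (d n : ℕ) (s : ℝ × ℝ × (Fin n → ℝ) → ℝ)
    (hconc : StrictConcaveOn ℝ {p : ℝ × ℝ × (Fin n → ℝ) | 0 < p.1} s)
    (hmono : ∀ (ν : ℝ) (z : Fin n → ℝ), StrictMono fun u => s (ν, u, z)) :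
    StrictConvexOn ℝ
      {p : ℝ × (Fin d → ℝ) × ℝ × (Fin n → ℝ) | 0 < p.1}
      (fun p => -p.1 * s (p.1⁻¹,
        p.2.2.1 / p.1 - (∑ i, p.2.1 i ^ 2) / (2 * p.1 ^ 2),
        p.1⁻¹ • p.2.2.2)) := by
  constructor
  · intro p hp q hq a b ha hb hab
    simp only [Set.mem_setOf_eq] at *
    have h1 : (a • p + b • q).1 = a * p.1 + b * q.1 := rfl
    rw [h1]
    rcases eq_or_lt_of_le ha with h | h
    · have hb1 : b = 1 := by linarith
      rw [← h, hb1]; simpa using hq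
    · nlinarith [mul_pos h hp, mul_nonneg hb hq.le]
  rintro ⟨ρ₁, m₁, E₁, Z₁⟩ hp ⟨ρ₂, m₂, E₂, Z₂⟩ hq hne a b ha hb hab
  simp only [Set.mem_setOf_eq] at hp hq
  simp only [Prod.smul_mk, Prod.mk_add_mk, smul_eq_mul, Pi.add_apply, Pi.smul_apply]
  set ρ : ℝ := a * ρ₁ + b * ρ₂ with hρdef
  have hρ : 0 < ρ := by positivity
  set S₁ : ℝ := ∑ i, m₁ i ^ 2 with hS₁
  set S₂ : ℝ := ∑ i, m₂ i ^ 2 with hS₂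
  set Sm : ℝ := ∑ i, (a * m₁ i + b * m₂ i) ^ 2 with hSm
  set u₁ : ℝ := E₁ / ρ₁ - S₁ / (2 * ρ₁ ^ 2) with hu₁
  set u₂ : ℝ := E₂ / ρ₂ - S₂ / (2 * ρ₂ ^ 2) with hu₂
  set u : ℝ := (a * E₁ + b * E₂) / ρ - Sm / (2 * ρ ^ 2) with hu
  set Zm : Fin n → ℝ := ρ⁻¹ • (a • Z₁ + b • Z₂) with hZm
  set a' : ℝ := a * ρ₁ / ρ with ha'def
  set b' : ℝ := b * ρ₂ / ρ with hb'def
  have ha' : 0 < a' := by positivity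
  have hb' : 0 < b' := by positivity
  have hab' : a' + b' = 1 := by
    rw [ha'def, hb'def, ← add_div, hρdef, div_self hρ.ne']
  set w₁ : ℝ × ℝ × (Fin n → ℝ) := (ρ₁⁻¹, u₁, ρ₁⁻¹ • Z₁) with hw₁def
  set w₂ : ℝ × ℝ × (Fin n → ℝ) := (ρ₂⁻¹, u₂, ρ₂⁻¹ • Z₂) with hw₂def
  have hw₁ : w₁ ∈ {p : ℝ × ℝ × (Fin n → ℝ) | 0 < p.1} := by
    simp [hw₁def, inv_pos, hp]
  have hw₂ : w₂ ∈ {p : ℝ × ℝ × (Fin n → ℝ) | 0 < p.1} := by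
    simp [hw₂def, inv_pos, hq]
  -- the mixed point in the s-domain
  have hmix : a' • w₁ + b' • w₂ = (ρ⁻¹, a' * u₁ + b' * u₂, Zm) := by
    refine Prod.ext ?_ (Prod.ext rfl ?_)
    · show a' * ρ₁⁻¹ + b' * ρ₂⁻¹ = ρ⁻¹
      have hne₁ := hp.ne'
      have hne₂ := hq.ne'
      have hneρ := hρ.ne'
      have step : a' * ρ₁⁻¹ + b' * ρ₂⁻¹ = (a + b) / ρ := by
        rw [ha'def, hb'def]
        field_simp
      rw [step, hab, one_div]
    · show a' • (ρ₁⁻¹ • Z₁) + b' • (ρ₂⁻¹ • Z₂) = Zm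
      funext i
      simp only [hZm, Pi.add_apply, Pi.smul_apply, smul_eq_mul]
      rw [ha'def, hb'def, hρdef]
      field_simp
  -- second coordinate comparison
  obtain ⟨hle, hlt⟩ := sum_ineq a b ρ₁ ρ₂ m₁ m₂ ha hb hp hq
  rw [← hρdef, ← hS₁, ← hS₂, ← hSm] at hle hlt
  have hucomp : a' * u₁ + b' * u₂ = u - (a*S₁/ρ₁ + b*S₂/ρ₂ - Sm/ρ) / (2*ρ) := by
    rw [ha'def, hb'def, hu₁, hu₂, hu, hρdef]
    field_simp
    ring
  have hule : a' * u₁ + b' * u₂ ≤ u := by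
    rw [hucomp]
    have : 0 ≤ (a*S₁/ρ₁ + b*S₂/ρ₂ - Sm/ρ) / (2*ρ) := by
      apply div_nonneg _ (by positivity)
      linarith
    linarith
  -- key strict inequality
  have main : a' * s w₁ + b' * s w₂ < s (ρ⁻¹, u, Zm) := by
    by_cases hw : w₁ = w₂
    · -- equal case: strictness comes from the u-coordinate
      have hρeq : ρ₁ = ρ₂ := by
        have := congrArg Prod.fst hw
        simpa [hw₁def, hw₂def, inv_inj] using this
      have hueq : u₁ = u₂ := congrArg (fun p => p.2.1) hw
      have hZeq : Z₁ = Z₂ := by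
        have h3 : ρ₁⁻¹ • Z₁ = ρ₂⁻¹ • Z₂ := congrArg (fun p => p.2.2) hw
        rw [← hρeq] at h3
        exact smul_right_injective (Fin n → ℝ) (inv_ne_zero hp.ne') h3
      have hmne : m₁ ≠ m₂ := by
        intro hm
        apply hne
        have hSeq : S₁ = S₂ := by rw [hS₁, hS₂, hm]
        have hE : E₁ / ρ₁ = E₂ / ρ₁ := by
          rw [hu₁, hu₂, ← hSeq, ← hρeq] at hueq
          linarith
        have hEeq : E₁ = E₂ := by
          field_simp at hE
          exact hE
        rw [hρeq, hm, hEeq, hZeq]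
      obtain ⟨i, hi⟩ := Function.ne_iff.mp hmne
      have hustrict : a' * u₁ + b' * u₂ < u := by
        rw [hucomp]
        have : 0 < (a*S₁/ρ₁ + b*S₂/ρ₂ - Sm/ρ) / (2*ρ) := by
          apply div_pos _ (by positivity)
          have := hlt ⟨i, by rw [← hρeq]; exact fun h => hi (mul_right_cancel₀ hp.ne' h)⟩
          linarith
        linarith
      have hcombo : a' * s w₁ + b' * s w₂ = s (ρ⁻¹, a' * u₁ + b' * u₂, Zm) := by
        have h5 : a' • w₁ + b' • w₂ = w₁ := by
          rw [← hw, Convex.combo_self hab']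
        rw [← hmix, h5, ← hw]
        rw [← add_mul, hab', one_mul]
      calc a' * s w₁ + b' * s w₂ = s (ρ⁻¹, a' * u₁ + b' * u₂, Zm) := hcombo
        _ < s (ρ⁻¹, u, Zm) := hmono ρ⁻¹ Zm hustrict
    · have hconc2 := hconc.2 hw₁ hw₂ hw ha' hb' hab'
      rw [hmix] at hconc2
      calc a' * s w₁ + b' * s w₂
          = a' • s w₁ + b' • s w₂ := rfl
        _ < s (ρ⁻¹, a' * u₁ + b' * u₂, Zm) := hconc2
        _ ≤ s (ρ⁻¹, u, Zm) := (hmono ρ⁻¹ Zm).monotone hule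
  -- conclude
  have hρ' : ρ * (a' * s w₁ + b' * s w₂) = a * ρ₁ * s w₁ + b * ρ₂ * s w₂ := by
    rw [ha'def, hb'def]
    field_simp
  have goal2 : -(ρ * s (ρ⁻¹, u, Zm)) < -(a * ρ₁ * s w₁ + b * ρ₂ * s w₂) := by
    rw [← hρ']
    have := mul_lt_mul_of_pos_left main hρ
    linarith
  nlinarith [goal2]
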